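/- Let K : ℝ³ × ℝ³ → ℂ be measurable with |K(x,y)| ≤ c₀/|x − y|³ for all x ≠ y, and let g₀ : ℝ³ → ℝ be Lipschitz continuous with Lipschitz constant c₁ (e.g. g₀ ∈ C¹ with bounded derivative). Then there is a constant c, depending only on c₀ and c₁, such that for all ψ ∈ L²(ℝ³) and all φ ∈ C_c^∞(ℝ³): | ∫_{ℝ³} ∫_{ℝ³} conj(ψ(x)) · K(x,y) · (g₀(y) − g₀(x)) · (1/|y|) · φ(y) dy dx | ≤ c · ‖ψ‖₂ · ‖φ‖₂. -/

import Mathlib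

open Real MeasureTheory Metric ENNReal Filter

noncomputable section

local notation "E3" => EuclideanSpace ℝ (Fin 3)

private lemma ofReal_norm_eq_coe_nnnorm {F : Type*} [SeminormedAddCommGroup F] (a : F) :
    ENNReal.ofReal ‖a‖ = (‖a‖₊ : ℝ≥0∞) := ofReal_norm a

private lemma enn_rpow_neg_le {a : ℝ} (ha : 0 < a) {x : ℝ≥0∞} (h : ENNReal.ofReal a ≤ x)
    {s : ℝ} (hs : 0 ≤ s) : x ^ (-s) ≤ ENNReal.ofReal (a ^ (-s)) := by
  rw [← ENNReal.ofReal_rpow_of_pos ha, ENNReal.rpow_neg, ENNReal.rpow_neg]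
  exact ENNReal.inv_le_inv.2 (ENNReal.rpow_le_rpow h hs)

private lemma vol_ball (w : E3) {r : ℝ} (hr : 0 ≤ r) :
    volume (ball w r) = ENNReal.ofReal (r ^ (3:ℕ)) * volume (ball (0:E3) 1) := by
  rw [Measure.addHaar_ball volume w hr, finrank_euclideanSpace_fin]

private lemma aux_ball {s : ℝ} (hs0 : 0 < s) (hs3 : s < 3) :
    ∃ C : ℝ≥0∞, C ≠ ⊤ ∧ ∀ (w : E3) (r : ℝ), 0 < r →
      ∫⁻ z in ball w r, ((‖w - z‖₊ : ℝ≥0∞)) ^ (-s) ≤ ENNReal.ofReal (r ^ (3 - s)) * C := by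
  classical
  set q : ℝ := (2:ℝ) ^ (s - 3) with hq
  have hq0 : 0 < q := Real.rpow_pos_of_pos two_pos _
  have hq1 : q < 1 := Real.rpow_lt_one_of_one_lt_of_neg one_lt_two (by linarith)
  refine ⟨ENNReal.ofReal ((2:ℝ) ^ s * (1 - q)⁻¹) * volume (ball (0:E3) 1),
    ENNReal.mul_ne_top ENNReal.ofReal_ne_top measure_ball_lt_top.ne, ?_⟩
  intro w r hr
  set ρ : ℕ → ℝ := fun n => r * ((2:ℝ)⁻¹) ^ n with hρ
  have hρ0 : ∀ n, 0 < ρ n := fun n => mul_pos hr (by positivity)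
  set T : ℕ → Set E3 := fun n => ball w (ρ n) \ ball w (ρ (n+1)) with hT
  have hcover : ball w r \ {w} ⊆ ⋃ n, T n := by
    intro z hz
    obtain ⟨hzball, hzw⟩ := hz
    have hd0 : 0 < dist z w := dist_pos.2 (by simpa using hzw)
    have hdr : dist z w < r := mem_ball.1 hzball
    have hex : ∃ n : ℕ, ρ (n+1) ≤ dist z w := by
      have h0 : Tendsto (fun n : ℕ => ρ (n+1)) atTop (nhds 0) := by
        have h1 : Tendsto (fun n : ℕ => ((2:ℝ)⁻¹) ^ n) atTop (nhds 0) :=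
          tendsto_pow_atTop_nhds_zero_of_lt_one (by norm_num) (by norm_num)
        have h2 : (fun n : ℕ => ρ (n+1)) = fun n : ℕ => (r * 2⁻¹) * ((2:ℝ)⁻¹) ^ n := by
          funext n; rw [hρ]; simp [pow_succ]; ring
        rw [h2]
        simpa using h1.const_mul (r * 2⁻¹)
      exact (h0.eventually_le_const hd0).exists
    set n := Nat.find hex with hn
    have hupper : dist z w < ρ n := by
      rcases Nat.eq_zero_or_pos n with h0 | h0
      · simpa [h0, hρ] using hdr
      · have h1 := Nat.find_min hex (m := n - 1) (by omega)
        push_neg at h1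
        have h2 : n - 1 + 1 = n := Nat.succ_pred_eq_of_pos h0
        rw [h2] at h1
        exact h1
    refine Set.mem_iUnion.2 ⟨n, mem_ball.2 hupper, fun hmem => ?_⟩
    exact absurd (Nat.find_spec hex) (not_le.2 (mem_ball.1 hmem))
  have hae : (ball w r : Set E3) =ᶠ[ae volume] (ball w r \ {w} : Set E3) := by
    refine (MeasureTheory.diff_ae_eq_self.2 ?_).symm
    exact measure_mono_null Set.inter_subset_right (measure_singleton w)
  have hshell : ∀ n, ∫⁻ z in T n, ((‖w - z‖₊ : ℝ≥0∞)) ^ (-s)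
      ≤ ENNReal.ofReal (r ^ (3 - s) * ((2:ℝ) ^ s * q ^ n)) * volume (ball (0:E3) 1) := by
    intro n
    have hmeas : MeasurableSet (T n) := measurableSet_ball.diff measurableSet_ball
    have hpt : ∀ z ∈ T n, ((‖w - z‖₊ : ℝ≥0∞)) ^ (-s) ≤ ENNReal.ofReal ((ρ (n+1)) ^ (-s)) := by
      intro z hz
      refine enn_rpow_neg_le (hρ0 (n+1)) ?_ hs0.le
      rw [← ofReal_norm_eq_coe_nnnorm]
      refine ENNReal.ofReal_le_ofReal ?_
      have : ¬ dist z w < ρ (n+1) := fun h => hz.2 (mem_ball.2 h)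
      rw [show ‖w - z‖ = dist z w by rw [dist_eq_norm, norm_sub_rev]]
      linarith [not_lt.1 this]
    calc ∫⁻ z in T n, ((‖w - z‖₊ : ℝ≥0∞)) ^ (-s)
        ≤ ∫⁻ _ in T n, ENNReal.ofReal ((ρ (n+1)) ^ (-s)) := setLIntegral_mono' hmeas hpt
      _ = ENNReal.ofReal ((ρ (n+1)) ^ (-s)) * volume (T n) := setLIntegral_const _ _
      _ ≤ ENNReal.ofReal ((ρ (n+1)) ^ (-s)) * volume (ball w (ρ n)) :=
          mul_le_mul_right (measure_mono Set.diff_subset) _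
      _ = ENNReal.ofReal ((ρ (n+1)) ^ (-s)) * (ENNReal.ofReal ((ρ n) ^ (3:ℕ)) * volume (ball (0:E3) 1)) := by
          rw [vol_ball w (hρ0 n).le]
      _ = ENNReal.ofReal (r ^ (3 - s) * ((2:ℝ) ^ s * q ^ n)) * volume (ball (0:E3) 1) := by
          rw [← mul_assoc, ← ENNReal.ofReal_mul (by positivity)]
          congr 2
          -- real computation
          rw [hρ, hq]
          rw [← Real.rpow_natCast (r * 2⁻¹ ^ n) 3]
          rw [Real.mul_rpow hr.le (by positivity), Real.mul_rpow hr.le (by positivity)]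
          rw [← Real.rpow_natCast ((2:ℝ)⁻¹) (n+1), ← Real.rpow_natCast ((2:ℝ)⁻¹) n,
            ← Real.rpow_natCast ((2:ℝ) ^ (s-3)) n]
          rw [Real.inv_rpow (by norm_num : (0:ℝ) ≤ 2), Real.inv_rpow (by norm_num : (0:ℝ) ≤ 2)]
          rw [← Real.rpow_neg (by norm_num : (0:ℝ) ≤ 2), ← Real.rpow_neg (by norm_num : (0:ℝ) ≤ 2)]
          rw [← Real.rpow_mul (by norm_num : (0:ℝ) ≤ 2), ← Real.rpow_mul (by norm_num : (0:ℝ) ≤ 2),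
            ← Real.rpow_mul (by norm_num : (0:ℝ) ≤ 2)]
          rw [mul_mul_mul_comm]
          rw [← Real.rpow_add hr, ← Real.rpow_add two_pos, ← Real.rpow_add two_pos]
          congr 1
          · congr 1; push_cast; ring
          · congr 1; push_cast; ring
  calc ∫⁻ z in ball w r, ((‖w - z‖₊ : ℝ≥0∞)) ^ (-s)
      = ∫⁻ z in ball w r \ {w}, ((‖w - z‖₊ : ℝ≥0∞)) ^ (-s) := setLIntegral_congr hae
    _ ≤ ∫⁻ z in ⋃ n, T n, ((‖w - z‖₊ : ℝ≥0∞)) ^ (-s) := lintegral_mono_set hcover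
    _ ≤ ∑' n, ∫⁻ z in T n, ((‖w - z‖₊ : ℝ≥0∞)) ^ (-s) := lintegral_iUnion_le _ _
    _ ≤ ∑' n, ENNReal.ofReal (r ^ (3 - s) * ((2:ℝ) ^ s * q ^ n)) * volume (ball (0:E3) 1) :=
        ENNReal.tsum_le_tsum hshell
    _ = ENNReal.ofReal (r ^ (3 - s)) * (ENNReal.ofReal ((2:ℝ) ^ s * (1 - q)⁻¹) * volume (ball (0:E3) 1)) := by
        rw [ENNReal.tsum_mul_right, ← mul_assoc]
        congr 1
        rw [← ENNReal.ofReal_tsum_of_nonneg (fun n => by positivity)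
          (by
            have : Summable (fun n : ℕ => q ^ n) := summable_geometric_of_lt_one hq0.le hq1
            exact (this.mul_left _).mul_left _)]
        rw [← ENNReal.ofReal_mul (by positivity)]
        congr 1
        rw [tsum_mul_left, tsum_mul_left, tsum_geometric_of_lt_one hq0.le hq1]

private lemma aux_compl {t : ℝ} (ht : 3 < t) :
    ∃ C : ℝ≥0∞, C ≠ ⊤ ∧ ∀ r : ℝ, 0 < r →
      ∫⁻ z in (ball (0:E3) r)ᶜ, ((‖z‖₊ : ℝ≥0∞)) ^ (-t) ≤ ENNReal.ofReal (r ^ (3 - t)) * C := by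
  classical
  set q : ℝ := (2:ℝ) ^ (3 - t) with hq
  have hq0 : 0 < q := Real.rpow_pos_of_pos two_pos _
  have hq1 : q < 1 := Real.rpow_lt_one_of_one_lt_of_neg one_lt_two (by linarith)
  refine ⟨ENNReal.ofReal ((2:ℝ) ^ (3:ℝ) * (1 - q)⁻¹) * volume (ball (0:E3) 1),
    ENNReal.mul_ne_top ENNReal.ofReal_ne_top measure_ball_lt_top.ne, ?_⟩
  intro r hr
  set ρ : ℕ → ℝ := fun n => r * (2:ℝ) ^ n with hρ
  have hρ0 : ∀ n, 0 < ρ n := fun n => mul_pos hr (by positivity)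
  set T : ℕ → Set E3 := fun n => ball (0:E3) (ρ (n+1)) \ ball (0:E3) (ρ n) with hT
  have hcover : (ball (0:E3) r)ᶜ ⊆ ⋃ n, T n := by
    intro z hz
    have hzr : r ≤ ‖z‖ := by
      have := fun h => hz (mem_ball.2 h)
      rw [dist_zero_right] at this
      exact not_lt.1 (by exact fun h => this h)
    have hex : ∃ n : ℕ, ‖z‖ < ρ (n+1) := by
      obtain ⟨n, hn⟩ := pow_unbounded_of_one_lt (‖z‖ / r) (one_lt_two (α := ℝ))
      refine ⟨n, ?_⟩
      have h1 : ‖z‖ < r * 2 ^ n := by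
        rw [div_lt_iff₀ hr] at hn; linarith
      have h2 : (r:ℝ) * 2 ^ n ≤ r * 2 ^ (n+1) := by
        have h3 : (2:ℝ) ^ n ≤ 2 ^ (n+1) := by
          have := pow_pos (two_pos (α := ℝ)) n
          rw [pow_succ]; nlinarith
        nlinarith
      rw [hρ]; exact lt_of_lt_of_le h1 h2
    set n := Nat.find hex with hn
    have hupper : ‖z‖ < ρ (n+1) := Nat.find_spec hex
    have hlower : ρ n ≤ ‖z‖ := by
      rcases Nat.eq_zero_or_pos n with h0 | h0
      · simpa [h0, hρ] using hzr
      · have h1 := Nat.find_min hex (m := n - 1) (by omega)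
        push_neg at h1
        have h2 : n - 1 + 1 = n := Nat.succ_pred_eq_of_pos h0
        rw [h2] at h1
        exact h1
    refine Set.mem_iUnion.2 ⟨n, mem_ball.2 (by rwa [dist_zero_right]), fun hmem => ?_⟩
    rw [mem_ball, dist_zero_right] at hmem
    exact absurd hlower (not_le.2 hmem)
  have hshell : ∀ n, ∫⁻ z in T n, ((‖z‖₊ : ℝ≥0∞)) ^ (-t)
      ≤ ENNReal.ofReal (r ^ (3 - t) * ((2:ℝ) ^ (3:ℝ) * q ^ n)) * volume (ball (0:E3) 1) := by
    intro n
    have hmeas : MeasurableSet (T n) := measurableSet_ball.diff measurableSet_ball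
    have hpt : ∀ z ∈ T n, ((‖z‖₊ : ℝ≥0∞)) ^ (-t) ≤ ENNReal.ofReal ((ρ n) ^ (-t)) := by
      intro z hz
      refine enn_rpow_neg_le (hρ0 n) ?_ (by linarith)
      rw [← ofReal_norm_eq_coe_nnnorm]
      refine ENNReal.ofReal_le_ofReal ?_
      have : ¬ dist z 0 < ρ n := fun h => hz.2 (mem_ball.2 h)
      rw [dist_zero_right] at this
      linarith [not_lt.1 this]
    calc ∫⁻ z in T n, ((‖z‖₊ : ℝ≥0∞)) ^ (-t)
        ≤ ∫⁻ _ in T n, ENNReal.ofReal ((ρ n) ^ (-t)) := setLIntegral_mono' hmeas hpt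
      _ = ENNReal.ofReal ((ρ n) ^ (-t)) * volume (T n) := setLIntegral_const _ _
      _ ≤ ENNReal.ofReal ((ρ n) ^ (-t)) * volume (ball (0:E3) (ρ (n+1))) :=
          mul_le_mul_right (measure_mono Set.diff_subset) _
      _ = ENNReal.ofReal ((ρ n) ^ (-t)) * (ENNReal.ofReal ((ρ (n+1)) ^ (3:ℕ)) * volume (ball (0:E3) 1)) := by
          rw [vol_ball 0 (hρ0 (n+1)).le]
      _ = ENNReal.ofReal (r ^ (3 - t) * ((2:ℝ) ^ (3:ℝ) * q ^ n)) * volume (ball (0:E3) 1) := by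
          rw [← mul_assoc, ← ENNReal.ofReal_mul (by positivity)]
          congr 2
          rw [hρ, hq]
          rw [← Real.rpow_natCast (r * 2 ^ (n+1)) 3]
          rw [Real.mul_rpow hr.le (by positivity), Real.mul_rpow hr.le (by positivity)]
          rw [← Real.rpow_natCast ((2:ℝ)) (n+1), ← Real.rpow_natCast ((2:ℝ)) n,
            ← Real.rpow_natCast ((2:ℝ) ^ (3-t)) n]
          rw [← Real.rpow_mul (by norm_num : (0:ℝ) ≤ 2), ← Real.rpow_mul (by norm_num : (0:ℝ) ≤ 2),
            ← Real.rpow_mul (by norm_num : (0:ℝ) ≤ 2)]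
          rw [mul_mul_mul_comm]
          rw [← Real.rpow_add hr, ← Real.rpow_add two_pos, ← Real.rpow_add two_pos]
          congr 1
          · congr 1; push_cast; ring
          · congr 1; push_cast; ring
  calc ∫⁻ z in (ball (0:E3) r)ᶜ, ((‖z‖₊ : ℝ≥0∞)) ^ (-t)
      ≤ ∫⁻ z in ⋃ n, T n, ((‖z‖₊ : ℝ≥0∞)) ^ (-t) := lintegral_mono_set hcover
    _ ≤ ∑' n, ∫⁻ z in T n, ((‖z‖₊ : ℝ≥0∞)) ^ (-t) := lintegral_iUnion_le _ _
    _ ≤ ∑' n, ENNReal.ofReal (r ^ (3 - t) * ((2:ℝ) ^ (3:ℝ) * q ^ n)) * volume (ball (0:E3) 1) :=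
        ENNReal.tsum_le_tsum hshell
    _ = ENNReal.ofReal (r ^ (3 - t)) * (ENNReal.ofReal ((2:ℝ) ^ (3:ℝ) * (1 - q)⁻¹) * volume (ball (0:E3) 1)) := by
        rw [ENNReal.tsum_mul_right, ← mul_assoc]
        congr 1
        rw [← ENNReal.ofReal_tsum_of_nonneg (fun n => by positivity)
          (by
            have : Summable (fun n : ℕ => q ^ n) := summable_geometric_of_lt_one hq0.le hq1
            exact (this.mul_left _).mul_left _)]
        rw [← ENNReal.ofReal_mul (by positivity)]
        congr 1
        rw [tsum_mul_left, tsum_mul_left, tsum_geometric_of_lt_one hq0.le hq1]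

private lemma key_int{s : ℝ} (h1 : 1 < s) (h3 : s < 3) :
    ∃ C : ℝ≥0∞, C ≠ ⊤ ∧ ∀ w : E3, w ≠ 0 →
      ∫⁻ z, ((‖w - z‖₊ : ℝ≥0∞)) ^ (-(2:ℝ)) * ((‖z‖₊ : ℝ≥0∞)) ^ (-s)
        ≤ C * ENNReal.ofReal (‖w‖ ^ (1 - s)) := by
  obtain ⟨C₁, hC₁, hball₁⟩ := aux_ball (by linarith : (0:ℝ) < s) h3
  obtain ⟨C₂, hC₂, hball₂⟩ := aux_ball (by norm_num : (0:ℝ) < 2) (by norm_num : (2:ℝ) < 3)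
  obtain ⟨C₃, hC₃, hcompl⟩ := aux_compl (by linarith : (3:ℝ) < 2 + s)
  refine ⟨ENNReal.ofReal ((2:ℝ) ^ (s-1)) * C₁ + ENNReal.ofReal (3 * (2:ℝ) ^ s) * C₂
    + 4 * ENNReal.ofReal ((2:ℝ) ^ (1-s)) * C₃, by
      refine ENNReal.add_ne_top.2 ⟨ENNReal.add_ne_top.2 ⟨?_, ?_⟩, ?_⟩ <;>
        exact ENNReal.mul_ne_top (by simp [ENNReal.mul_ne_top]) (by assumption), ?_⟩
  intro w hw
  set R : ℝ := ‖w‖ with hR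
  have hR0 : 0 < R := norm_pos_iff.2 hw
  set f : E3 → ℝ≥0∞ := fun z => ((‖w - z‖₊ : ℝ≥0∞)) ^ (-(2:ℝ)) * ((‖z‖₊ : ℝ≥0∞)) ^ (-s) with hf
  set S₁ : Set E3 := ball (0:E3) (R/2) with hS₁
  set S₂ : Set E3 := ball (0:E3) (2*R) \ ball (0:E3) (R/2) with hS₂
  set S₃ : Set E3 := (ball (0:E3) (2*R))ᶜ with hS₃
  have hsplit : ∫⁻ z, f z ≤ (∫⁻ z in S₁, f z) + (∫⁻ z in S₂, f z) + (∫⁻ z in S₃, f z) := by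
    have huniv : (Set.univ : Set E3) = (S₁ ∪ S₂) ∪ S₃ := by
      rw [hS₁, hS₂, hS₃]
      rw [Set.union_diff_self, Set.union_eq_self_of_subset_left (ball_subset_ball (by linarith)),
        Set.union_compl_self]
    calc ∫⁻ z, f z = ∫⁻ z in (S₁ ∪ S₂) ∪ S₃, f z := by rw [← huniv, Measure.restrict_univ]
      _ ≤ (∫⁻ z in S₁ ∪ S₂, f z) + ∫⁻ z in S₃, f z := lintegral_union_le _ _ _
      _ ≤ ((∫⁻ z in S₁, f z) + ∫⁻ z in S₂, f z) + ∫⁻ z in S₃, f z :=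
          add_le_add_left (lintegral_union_le _ _ _) _
  -- term 1
  have hT₁ : ∫⁻ z in S₁, f z ≤ ENNReal.ofReal ((2:ℝ)^(s-1)) * C₁ * ENNReal.ofReal (R ^ (1-s)) := by
    have hpt : ∀ z ∈ S₁, f z ≤ ENNReal.ofReal ((R/2) ^ (-(2:ℝ))) * ((‖z‖₊ : ℝ≥0∞)) ^ (-s) := by
      intro z hz
      refine mul_le_mul_left ?_ _
      refine enn_rpow_neg_le (by positivity) ?_ (by norm_num)
      rw [← ofReal_norm_eq_coe_nnnorm]
      refine ENNReal.ofReal_le_ofReal ?_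
      have h1 : ‖z‖ < R/2 := by
        have := mem_ball.1 hz; rwa [dist_zero_right] at this
      have := norm_sub_norm_le w z
      linarith
    calc ∫⁻ z in S₁, f z
        ≤ ∫⁻ z in S₁, ENNReal.ofReal ((R/2) ^ (-(2:ℝ))) * ((‖z‖₊ : ℝ≥0∞)) ^ (-s) :=
          setLIntegral_mono' measurableSet_ball hpt
      _ = ENNReal.ofReal ((R/2) ^ (-(2:ℝ))) * ∫⁻ z in S₁, ((‖z‖₊ : ℝ≥0∞)) ^ (-s) :=
          lintegral_const_mul' _ _ ENNReal.ofReal_ne_top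
      _ = ENNReal.ofReal ((R/2) ^ (-(2:ℝ))) * ∫⁻ z in S₁, ((‖(0:E3) - z‖₊ : ℝ≥0∞)) ^ (-s) := by
          congr 1; refine lintegral_congr fun z => ?_; rw [zero_sub, nnnorm_neg]
      _ ≤ ENNReal.ofReal ((R/2) ^ (-(2:ℝ))) * (ENNReal.ofReal ((R/2) ^ (3 - s)) * C₁) :=
          mul_le_mul_right (hball₁ 0 (R/2) (by positivity)) _
      _ = ENNReal.ofReal ((2:ℝ)^(s-1)) * C₁ * ENNReal.ofReal (R ^ (1-s)) := by
          rw [← mul_assoc, ← ENNReal.ofReal_mul (by positivity)]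
          rw [mul_comm (ENNReal.ofReal ((2:ℝ)^(s-1))) C₁, mul_assoc,
            ← ENNReal.ofReal_mul (by positivity), mul_comm C₁ _]
          congr 2
          rw [← Real.rpow_add (by positivity : (0:ℝ) < R/2),
            show (-(2:ℝ) + (3 - s)) = 1 - s by ring,
            div_eq_mul_inv, Real.mul_rpow hR0.le (by positivity),
            Real.inv_rpow (by norm_num), ← Real.rpow_neg (by norm_num),
            show -(1 - s) = s - 1 by ring, mul_comm]
  -- term 2
  have hsub : S₂ ⊆ ball w (3*R) := by
    intro z hz
    have h1 : ‖z‖ < 2*R := by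
      have := mem_ball.1 hz.1; rwa [dist_zero_right] at this
    rw [mem_ball]
    calc dist z w ≤ dist z 0 + dist 0 w := dist_triangle _ _ _
      _ = ‖z‖ + R := by rw [dist_zero_right, dist_comm, dist_zero_right]
      _ < 3*R := by linarith
  have hT₂ : ∫⁻ z in S₂, f z ≤ ENNReal.ofReal (3*(2:ℝ)^s) * C₂ * ENNReal.ofReal (R ^ (1-s)) := by
    have hpt : ∀ z ∈ S₂, f z ≤ ((‖w - z‖₊ : ℝ≥0∞)) ^ (-(2:ℝ)) * ENNReal.ofReal ((R/2) ^ (-s)) := by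
      intro z hz
      refine mul_le_mul_right ?_ _
      refine enn_rpow_neg_le (by positivity) ?_ (by linarith)
      rw [← ofReal_norm_eq_coe_nnnorm]
      refine ENNReal.ofReal_le_ofReal ?_
      have h2 : ¬ dist z 0 < R/2 := fun h => hz.2 (mem_ball.2 h)
      rw [dist_zero_right] at h2
      linarith [not_lt.1 h2]
    calc ∫⁻ z in S₂, f z
        ≤ ∫⁻ z in S₂, ((‖w - z‖₊ : ℝ≥0∞)) ^ (-(2:ℝ)) * ENNReal.ofReal ((R/2) ^ (-s)) :=
          setLIntegral_mono' (measurableSet_ball.diff measurableSet_ball) hpt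
      _ = ENNReal.ofReal ((R/2) ^ (-s)) * ∫⁻ z in S₂, ((‖w - z‖₊ : ℝ≥0∞)) ^ (-(2:ℝ)) := by
          rw [← lintegral_const_mul' _ _ ENNReal.ofReal_ne_top]
          exact lintegral_congr fun z => mul_comm _ _
      _ ≤ ENNReal.ofReal ((R/2) ^ (-s)) * ∫⁻ z in ball w (3*R), ((‖w - z‖₊ : ℝ≥0∞)) ^ (-(2:ℝ)) :=
          mul_le_mul_right (lintegral_mono_set hsub) _
      _ ≤ ENNReal.ofReal ((R/2) ^ (-s)) * (ENNReal.ofReal ((3*R) ^ ((3:ℝ) - 2)) * C₂) :=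
          mul_le_mul_right (hball₂ w (3*R) (by positivity)) _
      _ = ENNReal.ofReal (3*(2:ℝ)^s) * C₂ * ENNReal.ofReal (R ^ (1-s)) := by
          rw [← mul_assoc, ← ENNReal.ofReal_mul (by positivity)]
          rw [mul_comm (ENNReal.ofReal (3*(2:ℝ)^s)) C₂, mul_assoc,
            ← ENNReal.ofReal_mul (by positivity), mul_comm C₂ _]
          congr 2
          rw [show ((3:ℝ) - 2) = 1 by norm_num, Real.rpow_one]
          rw [div_eq_mul_inv, Real.mul_rpow hR0.le (by positivity),
            Real.inv_rpow (by norm_num), ← Real.rpow_neg (by norm_num),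
            show -(-s) = s by ring,
            show (1 - s) = -s + 1 by ring, Real.rpow_add hR0, Real.rpow_one]
          ring
  -- term 3
  have hT₃ : ∫⁻ z in S₃, f z ≤ 4 * ENNReal.ofReal ((2:ℝ)^(1-s)) * C₃ * ENNReal.ofReal (R ^ (1-s)) := by
    have hpt : ∀ z ∈ S₃, f z ≤ 4 * ((‖z‖₊ : ℝ≥0∞)) ^ (-(2+s)) := by
      intro z hz
      have hz2 : 2*R ≤ ‖z‖ := by
        have h2 : ¬ dist z 0 < 2*R := fun h => hz (mem_ball.2 h)
        rw [dist_zero_right] at h2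
        exact not_lt.1 h2
      have hz0 : 0 < ‖z‖ := by linarith
      have h2 : ((‖w - z‖₊ : ℝ≥0∞)) ^ (-(2:ℝ)) ≤ ENNReal.ofReal ((‖z‖/2) ^ (-(2:ℝ))) := by
        refine enn_rpow_neg_le (by positivity) ?_ (by norm_num)
        rw [← ofReal_norm_eq_coe_nnnorm]
        refine ENNReal.ofReal_le_ofReal ?_
        have h3 : ‖z‖ - ‖w‖ ≤ ‖z - w‖ := norm_sub_norm_le z w
        have h4 : ‖w - z‖ = ‖z - w‖ := norm_sub_rev w z
        rw [h4]
        rw [← hR] at h3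
        linarith
      have h5 : ENNReal.ofReal ((‖z‖/2) ^ (-(2:ℝ))) = 4 * ((‖z‖₊ : ℝ≥0∞)) ^ (-(2:ℝ)) := by
        have hre : ((‖z‖/2:ℝ)) ^ (-(2:ℝ)) = 4 * ‖z‖ ^ (-(2:ℝ)) := by
          rw [Real.rpow_neg (by positivity), Real.rpow_neg hz0.le, Real.rpow_two, Real.rpow_two]
          field_simp
          ring
        rw [hre, ENNReal.ofReal_mul (by norm_num), ← ENNReal.ofReal_rpow_of_pos hz0,
          ofReal_norm_eq_coe_nnnorm]
        norm_num
      calc f z ≤ ENNReal.ofReal ((‖z‖/2) ^ (-(2:ℝ))) * ((‖z‖₊ : ℝ≥0∞)) ^ (-s) :=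
            mul_le_mul_left h2 _
        _ = 4 * (((‖z‖₊ : ℝ≥0∞)) ^ (-(2:ℝ)) * ((‖z‖₊ : ℝ≥0∞)) ^ (-s)) := by rw [h5, mul_assoc]
        _ = 4 * ((‖z‖₊ : ℝ≥0∞)) ^ (-(2+s)) := by
            congr 1
            rw [← ENNReal.rpow_add _ _ (by simpa using hz0.ne') ENNReal.coe_ne_top]
            congr 1
            ring
    calc ∫⁻ z in S₃, f z
        ≤ ∫⁻ z in S₃, 4 * ((‖z‖₊ : ℝ≥0∞)) ^ (-(2+s)) :=
          setLIntegral_mono' measurableSet_ball.compl hpt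
      _ = 4 * ∫⁻ z in S₃, ((‖z‖₊ : ℝ≥0∞)) ^ (-(2+s)) :=
          lintegral_const_mul' _ _ (by norm_num)
      _ ≤ 4 * (ENNReal.ofReal ((2*R) ^ (3 - (2+s))) * C₃) :=
          mul_le_mul_right (hcompl (2*R) (by positivity)) _
      _ = 4 * ENNReal.ofReal ((2:ℝ)^(1-s)) * C₃ * ENNReal.ofReal (R ^ (1-s)) := by
          rw [show (3 - ((2:ℝ)+s)) = 1 - s by ring]
          rw [Real.mul_rpow (by norm_num) hR0.le]
          rw [ENNReal.ofReal_mul (by positivity)]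
          ring
  calc ∫⁻ z, f z ≤ (∫⁻ z in S₁, f z) + (∫⁻ z in S₂, f z) + (∫⁻ z in S₃, f z) := hsplit
    _ ≤ ENNReal.ofReal ((2:ℝ)^(s-1)) * C₁ * ENNReal.ofReal (R ^ (1-s))
        + ENNReal.ofReal (3*(2:ℝ)^s) * C₂ * ENNReal.ofReal (R ^ (1-s))
        + 4 * ENNReal.ofReal ((2:ℝ)^(1-s)) * C₃ * ENNReal.ofReal (R ^ (1-s)) :=
        add_le_add (add_le_add hT₁ hT₂) hT₃
    _ = (ENNReal.ofReal ((2:ℝ) ^ (s-1)) * C₁ + ENNReal.ofReal (3 * (2:ℝ) ^ s) * C₂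
        + 4 * ENNReal.ofReal ((2:ℝ) ^ (1-s)) * C₃) * ENNReal.ofReal (R ^ (1-s)) := by
        rw [add_mul, add_mul]

private lemma enn_coe_rpow_ne_zero {y : NNReal} (hy : y ≠ 0) (e : ℝ) : ((y:ℝ≥0∞)) ^ e ≠ 0 := by
  simp [ENNReal.rpow_eq_zero_iff, hy]

private lemma enn_coe_rpow_ne_top {y : NNReal} (hy : y ≠ 0) (e : ℝ) : ((y:ℝ≥0∞)) ^ e ≠ ⊤ := by
  simp [ENNReal.rpow_eq_top_iff, hy]

/-- Let `K : ℝ³ × ℝ³ → ℂ` be measurable with `|K(x,y)| ≤ c₀/|x-y|³` for `x ≠ y`, and let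
`g₀ : ℝ³ → ℝ` be Lipschitz with constant `c₁`. Then there is a constant `c`, depending
only on `c₀` and `c₁`, such that for all `ψ ∈ L²(ℝ³)` and all `φ ∈ C_c^∞(ℝ³)`:
`|∫∫ conj(ψ(x)) K(x,y) (g₀(y) - g₀(x)) (1/|y|) φ(y) dy dx| ≤ c ‖ψ‖₂ ‖φ‖₂`. -/
theorem commutator_coulomb_form_bound (c₀ : ℝ) (c₁ : NNReal) :
    ∃ c : ℝ, ∀ (K : EuclideanSpace ℝ (Fin 3) × EuclideanSpace ℝ (Fin 3) → ℂ)
      (g₀ : EuclideanSpace ℝ (Fin 3) → ℝ),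
      Measurable K →
      (∀ x y : EuclideanSpace ℝ (Fin 3), x ≠ y → ‖K (x, y)‖ ≤ c₀ / ‖x - y‖ ^ 3) →
      LipschitzWith c₁ g₀ →
      ∀ ψ φ : EuclideanSpace ℝ (Fin 3) → ℂ,
        MemLp ψ 2 volume → ContDiff ℝ (⊤ : ℕ∞) φ → HasCompactSupport φ →
        ‖∫ x, ∫ y, (starRingEnd ℂ) (ψ x) * K (x, y) * ((g₀ y - g₀ x : ℝ) : ℂ) *
            ((1 / ‖y‖ : ℝ) : ℂ) * φ y‖ ≤
          c * (eLpNorm ψ 2 volume).toReal * (eLpNorm φ 2 volume).toReal := by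
  obtain ⟨C₁, hC₁, hkey₁⟩ := key_int (s := 5/2) (by norm_num) (by norm_num)
  obtain ⟨C₂, hC₂, hkey₂⟩ := key_int (s := 3/2) (by norm_num) (by norm_num)
  set D : ℝ≥0∞ := ENNReal.ofReal c₀ * (c₁ : ℝ≥0∞) with hD
  have hDne : D ≠ ⊤ := ENNReal.mul_ne_top ENNReal.ofReal_ne_top ENNReal.coe_ne_top
  set CS : ℝ≥0∞ := C₁ ^ (1/(2:ℝ)) * C₂ ^ (1/(2:ℝ)) with hCS
  have hCSne : CS ≠ ⊤ := ENNReal.mul_ne_top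
    (ENNReal.rpow_ne_top_of_nonneg (by norm_num) hC₁)
    (ENNReal.rpow_ne_top_of_nonneg (by norm_num) hC₂)
  refine ⟨(D * CS).toReal, ?_⟩
  intro K g₀ hK hKb hg ψ φ hψ hφs hφc
  have hc₀ : 0 ≤ c₀ := by
    set e : E3 := EuclideanSpace.single (0 : Fin 3) (1:ℝ) with he
    have hne : (0:E3) ≠ e := by
      intro h0
      have : ‖e‖ = 1 := by rw [he, EuclideanSpace.norm_single]; norm_num
      rw [← h0, norm_zero] at this
      norm_num at this
    have hb := hKb 0 e hne
    have hnorm : ‖(0:E3) - e‖ = 1 := by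
      rw [zero_sub, norm_neg, he, EuclideanSpace.norm_single]; norm_num
    rw [hnorm] at hb
    have h13 : c₀ / (1:ℝ) ^ 3 = c₀ := by norm_num
    rw [h13] at hb
    exact le_trans (norm_nonneg _) hb
  have hφcont : Continuous φ := hφs.continuous
  have hφm : MemLp φ 2 volume := hφcont.memLp_of_hasCompactSupport hφc
  set A : ℝ≥0∞ := eLpNorm ψ 2 volume with hA
  set B : ℝ≥0∞ := eLpNorm φ 2 volume with hB
  have hAne : A ≠ ⊤ := hψ.eLpNorm_lt_top.ne
  have hBne : B ≠ ⊤ := hφm.eLpNorm_lt_top.ne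
  set u : E3 → ℝ≥0∞ := fun x => (‖ψ x‖₊ : ℝ≥0∞) with hu
  set v : E3 → ℝ≥0∞ := fun y => (‖φ y‖₊ : ℝ≥0∞) with hv
  set h : E3 → ℝ≥0∞ := fun x => (‖x‖₊ : ℝ≥0∞) ^ (-(3/2 : ℝ)) with hh
  set N : E3 × E3 → ℝ≥0∞ :=
    fun p => (‖p.1 - p.2‖₊ : ℝ≥0∞) ^ (-(2:ℝ)) * (‖p.2‖₊ : ℝ≥0∞) ^ (-(1:ℝ)) with hN
  -- basic measurability
  have hNm : Measurable N :=
    (((measurable_fst.sub measurable_snd).nnnorm.coe_nnreal_ennreal).pow_const _).mul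
      ((measurable_snd.nnnorm.coe_nnreal_ennreal).pow_const _)
  have hhm : Measurable h := (measurable_nnnorm.coe_nnreal_ennreal).pow_const _
  have hum : AEMeasurable u volume := hψ.1.enorm
  have hvm : Measurable v := hφcont.measurable.nnnorm.coe_nnreal_ennreal
  have hufst : AEMeasurable (fun p : E3 × E3 => u p.1) (volume.prod volume) :=
    hum.comp_quasiMeasurePreserving Measure.quasiMeasurePreserving_fst
  -- h is never 0, and finite away from 0
  have hh0 : ∀ x, h x ≠ 0 := by
    intro x
    rw [hh]
    simp only [ne_eq, ENNReal.rpow_eq_zero_iff, not_or]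
    constructor
    · rintro ⟨-, hlt⟩; linarith
    · rintro ⟨htop, -⟩; exact ENNReal.coe_ne_top htop
  have hhtop : ∀ x : E3, x ≠ 0 → h x ≠ ⊤ := by
    intro x hx
    rw [hh]
    intro htop
    rcases ENNReal.rpow_eq_top_iff.1 htop with ⟨h0, -⟩ | ⟨htop', -⟩
    · rw [ENNReal.coe_eq_zero, nnnorm_eq_zero] at h0; exact hx h0
    · exact ENNReal.coe_ne_top htop'
  -- the bad set is null
  have hZnull : (volume.prod volume : Measure (E3 × E3))
      {p : E3 × E3 | p.1 = 0 ∨ p.2 = 0 ∨ p.1 = p.2} = 0 := by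
    rw [Set.setOf_or, Set.setOf_or]
    refine measure_union_null ?_ (measure_union_null ?_ ?_)
    · exact Measure.quasiMeasurePreserving_fst.preimage_null (measure_singleton (0:E3))
    · exact Measure.quasiMeasurePreserving_snd.preimage_null (measure_singleton (0:E3))
    · have hdm : MeasurableSet {p : E3 × E3 | p.1 = p.2} :=
        (isClosed_eq continuous_fst continuous_snd).measurableSet
      rw [Measure.prod_apply hdm]
      have hpre : ∀ x : E3, (Prod.mk x ⁻¹' {p : E3 × E3 | p.1 = p.2}) = {x} := by
        intro x; ext y; simp [eq_comm]
      simp [hpre]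
  have hae : ∀ᵐ p ∂(volume.prod volume : Measure (E3 × E3)),
      p.1 ≠ 0 ∧ p.2 ≠ 0 ∧ p.1 ≠ p.2 := by
    have := measure_eq_zero_iff_ae_notMem.1 hZnull
    filter_upwards [this] with p hp
    push_neg at hp
    exact hp
  set F : E3 × E3 → ℝ≥0∞ := fun p => u p.1 * (N p * h p.2 * (h p.1)⁻¹) ^ (1/(2:ℝ)) with hF
  set G : E3 × E3 → ℝ≥0∞ := fun p => v p.2 * (N p * h p.1 * (h p.2)⁻¹) ^ (1/(2:ℝ)) with hG
  have hFm : AEMeasurable F (volume.prod volume) :=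
    hufst.mul (((hNm.mul (hhm.comp measurable_snd)).mul
      ((hhm.comp measurable_fst).inv)).pow_const _).aemeasurable
  have hGm : AEMeasurable G (volume.prod volume) :=
    ((hvm.comp measurable_snd).aemeasurable).mul (((hNm.mul (hhm.comp measurable_fst)).mul
      ((hhm.comp measurable_snd).inv)).pow_const _).aemeasurable
  have hFG : ∀ᵐ p ∂(volume.prod volume : Measure (E3 × E3)),
      u p.1 * N p * v p.2 = F p * G p := by
    filter_upwards [hae] with p hp
    obtain ⟨h1, h2, h3⟩ := hp
    have hd : ‖p.1 - p.2‖₊ ≠ 0 := by simp [sub_ne_zero.2 h3]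
    have hb : ‖p.2‖₊ ≠ 0 := by simp [h2]
    have hn0 : N p ≠ 0 := mul_ne_zero (enn_coe_rpow_ne_zero hd _) (enn_coe_rpow_ne_zero hb _)
    have hntop : N p ≠ ⊤ :=
      ENNReal.mul_ne_top (enn_coe_rpow_ne_top hd _) (enn_coe_rpow_ne_top hb _)
    simp only [hF, hG]
    rw [mul_mul_mul_comm, ← ENNReal.mul_rpow_of_nonneg _ _ (by norm_num : (0:ℝ) ≤ 1/2)]
    have hinner : (N p * h p.2 * (h p.1)⁻¹) * (N p * h p.1 * (h p.2)⁻¹) = N p ^ (2:ℝ) := by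
      rw [show ((2:ℝ)) = ((2:ℕ):ℝ) by norm_num, ENNReal.rpow_natCast, sq]
      calc (N p * h p.2 * (h p.1)⁻¹) * (N p * h p.1 * (h p.2)⁻¹)
          = (N p * N p) * ((h p.1)⁻¹ * h p.1) * (h p.2 * (h p.2)⁻¹) := by ring
        _ = N p * N p := by
            rw [ENNReal.inv_mul_cancel (hh0 p.1) (hhtop p.1 h1),
              ENNReal.mul_inv_cancel (hh0 p.2) (hhtop p.2 h2), mul_one, mul_one]
    rw [hinner, ← ENNReal.rpow_mul, show ((2:ℝ) * (1/2)) = 1 by norm_num, ENNReal.rpow_one]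
    ring
  -- Tonelli
  set W : E3 × E3 → ℝ≥0∞ := fun p => u p.1 * N p * v p.2 with hW
  have hWm : AEMeasurable W (volume.prod volume) :=
    (hufst.mul hNm.aemeasurable).mul (hvm.comp measurable_snd).aemeasurable
  have hiter : ∫⁻ x, ∫⁻ y, W (x, y) = ∫⁻ p, W p ∂(volume.prod volume) := by
    rw [lintegral_lintegral (f := fun x y => W (x, y)) (by exact hWm)]
  have hHold : ∫⁻ p, W p ∂(volume.prod volume) ≤
      (∫⁻ p, F p ^ (2:ℝ) ∂(volume.prod volume)) ^ (1/(2:ℝ)) *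
      (∫⁻ p, G p ^ (2:ℝ) ∂(volume.prod volume)) ^ (1/(2:ℝ)) := by
    calc ∫⁻ p, W p ∂(volume.prod volume) = ∫⁻ p, (F * G) p ∂(volume.prod volume) :=
          lintegral_congr_ae hFG
      _ ≤ _ := ENNReal.lintegral_mul_le_Lp_mul_Lq _ ⟨by norm_num, by norm_num, by norm_num⟩ hFm hGm
  have habs : ∀ᵐ x : E3 ∂volume, x ≠ 0 := by
    rw [ae_iff]
    have hset : {x : E3 | ¬ x ≠ 0} = {0} := by ext x; simp
    rw [hset]
    exact measure_singleton 0
  have hA2 : ∫⁻ x, u x ^ (2:ℝ) = A ^ (2:ℝ) := by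
    rw [hA, eLpNorm_eq_lintegral_rpow_enorm_toReal (p := 2) (by norm_num) (by norm_num),
      ← ENNReal.rpow_mul]
    norm_num [hu]; rfl
  have hB2 : ∫⁻ y, v y ^ (2:ℝ) = B ^ (2:ℝ) := by
    rw [hB, eLpNorm_eq_lintegral_rpow_enorm_toReal (p := 2) (by norm_num) (by norm_num),
      ← ENNReal.rpow_mul]
    norm_num [hv]; rfl
  -- bound on ∫ F²
  have hFsq : ∫⁻ p, F p ^ (2:ℝ) ∂(volume.prod volume) ≤ C₁ * A ^ (2:ℝ) := by
    have hpteq : ∀ p : E3 × E3, F p ^ (2:ℝ) = u p.1 ^ (2:ℝ) * (N p * h p.2 * (h p.1)⁻¹) := by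
      intro p
      simp only [hF]
      rw [ENNReal.mul_rpow_of_nonneg _ _ (by norm_num : (0:ℝ) ≤ 2), ← ENNReal.rpow_mul,
        show ((1/2:ℝ) * 2) = 1 by norm_num, ENNReal.rpow_one]
    have hmeas2 : AEMeasurable (fun p : E3 × E3 => u p.1 ^ (2:ℝ) * (N p * h p.2 * (h p.1)⁻¹))
        (volume.prod volume) :=
      (hufst.pow_const _).mul ((hNm.mul (hhm.comp measurable_snd)).mul
        ((hhm.comp measurable_fst).inv)).aemeasurable
    have hinnerconst : ∀ x : E3, u x ^ (2:ℝ) * (h x)⁻¹ ≠ ⊤ :=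
      fun x => ENNReal.mul_ne_top (ENNReal.rpow_ne_top_of_nonneg (by norm_num) ENNReal.coe_ne_top)
        (ENNReal.inv_ne_top.2 (hh0 x))
    have hinner : ∀ᵐ x : E3 ∂volume,
        ∫⁻ y, u x ^ (2:ℝ) * (N (x, y) * h y * (h x)⁻¹) ≤ C₁ * u x ^ (2:ℝ) := by
      filter_upwards [habs] with x hx
      have hxnorm : (0:ℝ) < ‖x‖ := norm_pos_iff.2 hx
      have step1 : ∫⁻ y, u x ^ (2:ℝ) * (N (x, y) * h y * (h x)⁻¹)
          = (u x ^ (2:ℝ) * (h x)⁻¹) * ∫⁻ y, N (x, y) * h y := by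
        rw [← lintegral_const_mul' _ _ (hinnerconst x)]
        exact lintegral_congr fun y => by ring
      have step2 : ∫⁻ y, N (x, y) * h y
          = ∫⁻ y, ((‖x - y‖₊ : ℝ≥0∞)) ^ (-(2:ℝ)) * ((‖y‖₊ : ℝ≥0∞)) ^ (-(5/2:ℝ)) := by
        refine lintegral_congr_ae ?_
        filter_upwards [habs] with y hy
        simp only [hN, hh]
        rw [mul_assoc, ← ENNReal.rpow_add _ _ (by simpa using hy) ENNReal.coe_ne_top,
          show (-(1:ℝ)) + (-(3/2:ℝ)) = -(5/2:ℝ) by norm_num]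
      have step3 : C₁ * ENNReal.ofReal (‖x‖ ^ ((1:ℝ) - 5/2)) = C₁ * h x := by
        congr 1
        rw [show ((1:ℝ) - 5/2) = -(3/2:ℝ) by norm_num, ← ENNReal.ofReal_rpow_of_pos hxnorm,
          ofReal_norm_eq_coe_nnnorm, hh]
      calc ∫⁻ y, u x ^ (2:ℝ) * (N (x, y) * h y * (h x)⁻¹)
          = (u x ^ (2:ℝ) * (h x)⁻¹) * ∫⁻ y, N (x, y) * h y := step1
        _ ≤ (u x ^ (2:ℝ) * (h x)⁻¹) * (C₁ * ENNReal.ofReal (‖x‖ ^ ((1:ℝ) - 5/2))) := by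
            refine mul_le_mul_right ?_ _
            rw [step2]
            exact hkey₁ x hx
        _ = (u x ^ (2:ℝ) * (h x)⁻¹) * (C₁ * h x) := by rw [step3]
        _ = C₁ * u x ^ (2:ℝ) * ((h x)⁻¹ * h x) := by ring
        _ = C₁ * u x ^ (2:ℝ) := by
            rw [ENNReal.inv_mul_cancel (hh0 x) (hhtop x hx), mul_one]
    calc ∫⁻ p, F p ^ (2:ℝ) ∂(volume.prod volume)
        = ∫⁻ p, u p.1 ^ (2:ℝ) * (N p * h p.2 * (h p.1)⁻¹) ∂(volume.prod volume) :=
          lintegral_congr hpteq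
      _ = ∫⁻ x, ∫⁻ y, u x ^ (2:ℝ) * (N (x, y) * h y * (h x)⁻¹) := lintegral_prod _ hmeas2
      _ ≤ ∫⁻ x, C₁ * u x ^ (2:ℝ) := lintegral_mono_ae hinner
      _ = C₁ * ∫⁻ x, u x ^ (2:ℝ) := lintegral_const_mul' _ _ hC₁
      _ = C₁ * A ^ (2:ℝ) := by rw [hA2]
  -- bound on ∫ G²
  have hGsq : ∫⁻ p, G p ^ (2:ℝ) ∂(volume.prod volume) ≤ C₂ * B ^ (2:ℝ) := by
    have hpteq : ∀ p : E3 × E3, G p ^ (2:ℝ) = v p.2 ^ (2:ℝ) * (N p * h p.1 * (h p.2)⁻¹) := by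
      intro p
      simp only [hG]
      rw [ENNReal.mul_rpow_of_nonneg _ _ (by norm_num : (0:ℝ) ≤ 2), ← ENNReal.rpow_mul,
        show ((1/2:ℝ) * 2) = 1 by norm_num, ENNReal.rpow_one]
    have hmeas2 : AEMeasurable (fun p : E3 × E3 => v p.2 ^ (2:ℝ) * (N p * h p.1 * (h p.2)⁻¹))
        (volume.prod volume) :=
      (((hvm.comp measurable_snd).pow_const _).mul ((hNm.mul (hhm.comp measurable_fst)).mul
        ((hhm.comp measurable_snd).inv))).aemeasurable
    have hinnerconst : ∀ y : E3, v y ^ (2:ℝ) * (h y)⁻¹ ≠ ⊤ :=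
      fun y => ENNReal.mul_ne_top (ENNReal.rpow_ne_top_of_nonneg (by norm_num) ENNReal.coe_ne_top)
        (ENNReal.inv_ne_top.2 (hh0 y))
    have hinner : ∀ᵐ y : E3 ∂volume,
        ∫⁻ x, v y ^ (2:ℝ) * (N (x, y) * h x * (h y)⁻¹) ≤ C₂ * v y ^ (2:ℝ) := by
      filter_upwards [habs] with y hy
      have hynorm : (0:ℝ) < ‖y‖ := norm_pos_iff.2 hy
      have hbne : ((‖y‖₊ : ℝ≥0∞)) ^ (-(1:ℝ)) ≠ ⊤ := enn_coe_rpow_ne_top (by simpa using hy) _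
      have step1 : ∫⁻ x, v y ^ (2:ℝ) * (N (x, y) * h x * (h y)⁻¹)
          = (v y ^ (2:ℝ) * (h y)⁻¹ * ((‖y‖₊ : ℝ≥0∞)) ^ (-(1:ℝ)))
            * ∫⁻ x, ((‖y - x‖₊ : ℝ≥0∞)) ^ (-(2:ℝ)) * ((‖x‖₊ : ℝ≥0∞)) ^ (-(3/2:ℝ)) := by
        rw [← lintegral_const_mul' _ _ (ENNReal.mul_ne_top (hinnerconst y) hbne)]
        refine lintegral_congr fun x => ?_
        simp only [hN, hh]
        rw [show ‖x - y‖₊ = ‖y - x‖₊ by rw [← neg_sub, nnnorm_neg]]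
        ring
      have step3 : C₂ * ENNReal.ofReal (‖y‖ ^ ((1:ℝ) - 3/2))
          = C₂ * ((‖y‖₊ : ℝ≥0∞)) ^ (-(1/2:ℝ)) := by
        congr 1
        rw [show ((1:ℝ) - 3/2) = -(1/2:ℝ) by norm_num, ← ENNReal.ofReal_rpow_of_pos hynorm,
          ofReal_norm_eq_coe_nnnorm]
      calc ∫⁻ x, v y ^ (2:ℝ) * (N (x, y) * h x * (h y)⁻¹)
          = (v y ^ (2:ℝ) * (h y)⁻¹ * ((‖y‖₊ : ℝ≥0∞)) ^ (-(1:ℝ)))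
            * ∫⁻ x, ((‖y - x‖₊ : ℝ≥0∞)) ^ (-(2:ℝ)) * ((‖x‖₊ : ℝ≥0∞)) ^ (-(3/2:ℝ)) := step1
        _ ≤ (v y ^ (2:ℝ) * (h y)⁻¹ * ((‖y‖₊ : ℝ≥0∞)) ^ (-(1:ℝ)))
            * (C₂ * ENNReal.ofReal (‖y‖ ^ ((1:ℝ) - 3/2))) :=
            mul_le_mul_right (hkey₂ y hy) _
        _ = (v y ^ (2:ℝ) * (h y)⁻¹) * (C₂ * (((‖y‖₊ : ℝ≥0∞)) ^ (-(1:ℝ))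
            * ((‖y‖₊ : ℝ≥0∞)) ^ (-(1/2:ℝ)))) := by rw [step3]; ring
        _ = (v y ^ (2:ℝ) * (h y)⁻¹) * (C₂ * h y) := by
            rw [← ENNReal.rpow_add _ _ (by simpa using hy) ENNReal.coe_ne_top,
              show (-(1:ℝ)) + (-(1/2:ℝ)) = -(3/2:ℝ) by norm_num, hh]
        _ = C₂ * v y ^ (2:ℝ) * ((h y)⁻¹ * h y) := by ring
        _ = C₂ * v y ^ (2:ℝ) := by
            rw [ENNReal.inv_mul_cancel (hh0 y) (hhtop y hy), mul_one]
    calc ∫⁻ p, G p ^ (2:ℝ) ∂(volume.prod volume)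
        = ∫⁻ p, v p.2 ^ (2:ℝ) * (N p * h p.1 * (h p.2)⁻¹) ∂(volume.prod volume) :=
          lintegral_congr hpteq
      _ = ∫⁻ y, ∫⁻ x, v y ^ (2:ℝ) * (N (x, y) * h x * (h y)⁻¹) := lintegral_prod_symm _ hmeas2
      _ ≤ ∫⁻ y, C₂ * v y ^ (2:ℝ) := lintegral_mono_ae hinner
      _ = C₂ * ∫⁻ y, v y ^ (2:ℝ) := lintegral_const_mul' _ _ hC₂
      _ = C₂ * B ^ (2:ℝ) := by rw [hB2]
  -- the Schur bound
  have hS : ∫⁻ x, ∫⁻ y, W (x, y) ≤ CS * (A * B) := by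
    rw [hiter]
    calc ∫⁻ p, W p ∂(volume.prod volume)
        ≤ (∫⁻ p, F p ^ (2:ℝ) ∂(volume.prod volume)) ^ (1/(2:ℝ)) *
          (∫⁻ p, G p ^ (2:ℝ) ∂(volume.prod volume)) ^ (1/(2:ℝ)) := hHold
      _ ≤ (C₁ * A ^ (2:ℝ)) ^ (1/(2:ℝ)) * (C₂ * B ^ (2:ℝ)) ^ (1/(2:ℝ)) :=
          mul_le_mul' (ENNReal.rpow_le_rpow hFsq (by norm_num))
            (ENNReal.rpow_le_rpow hGsq (by norm_num))
      _ = CS * (A * B) := by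
          rw [ENNReal.mul_rpow_of_nonneg _ _ (by norm_num : (0:ℝ) ≤ 1/2),
            ENNReal.mul_rpow_of_nonneg _ _ (by norm_num : (0:ℝ) ≤ 1/2),
            ← ENNReal.rpow_mul, ← ENNReal.rpow_mul,
            show ((2:ℝ) * (1/2)) = 1 by norm_num, ENNReal.rpow_one, ENNReal.rpow_one, hCS]
          ring
  -- pointwise bound of the integrand
  set I : E3 → E3 → ℂ := fun x y => (starRingEnd ℂ) (ψ x) * K (x, y) * ((g₀ y - g₀ x : ℝ) : ℂ) *
      ((1 / ‖y‖ : ℝ) : ℂ) * φ y with hI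
  have hane : ∀ a : E3, ∀ᵐ y : E3 ∂volume, y ≠ a := by
    intro a
    rw [ae_iff]
    have hset : {y : E3 | ¬ y ≠ a} = {a} := by ext y; simp
    rw [hset]
    exact measure_singleton a
  have hpt : ∀ x : E3, ∫⁻ y, (‖I x y‖₊ : ℝ≥0∞) ≤ ∫⁻ y, D * W (x, y) := by
    intro x
    refine lintegral_mono_ae ?_
    filter_upwards [habs, hane x] with y hy0 hyx
    have hxy : x ≠ y := fun hc => hyx hc.symm
    have hdpos : (0:ℝ) < ‖x - y‖ := by
      rw [norm_pos_iff, sub_ne_zero]; exact hxy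
    have hdne : ((‖x - y‖₊ : ℝ≥0∞)) ≠ 0 := by
      simp [nnnorm_eq_zero, sub_ne_zero.2 hxy]
    have hKB : (‖K (x, y)‖₊ : ℝ≥0∞) ≤ ENNReal.ofReal c₀ * ((‖x - y‖₊ : ℝ≥0∞)) ^ (-(3:ℝ)) := by
      rw [← ofReal_norm_eq_coe_nnnorm]
      calc ENNReal.ofReal ‖K (x, y)‖ ≤ ENNReal.ofReal (c₀ / ‖x - y‖ ^ 3) :=
            ENNReal.ofReal_le_ofReal (hKb x y hxy)
        _ = ENNReal.ofReal c₀ * ((‖x - y‖₊ : ℝ≥0∞)) ^ (-(3:ℝ)) := by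
            have hrw : c₀ / ‖x - y‖ ^ 3 = c₀ * ‖x - y‖ ^ (-(3:ℝ)) := by
              have : ‖x - y‖ ^ (-(3:ℝ)) = (‖x - y‖ ^ (3:ℕ))⁻¹ := by
                rw [Real.rpow_neg (norm_nonneg _), ← Real.rpow_natCast ‖x - y‖ 3]
                norm_num
              rw [this, div_eq_mul_inv]
            rw [hrw, ENNReal.ofReal_mul hc₀, ← ENNReal.ofReal_rpow_of_pos hdpos,
              ofReal_norm_eq_coe_nnnorm]
    have hgB : (‖((g₀ y - g₀ x : ℝ) : ℂ)‖₊ : ℝ≥0∞) ≤ (c₁ : ℝ≥0∞) * ((‖x - y‖₊ : ℝ≥0∞)) := by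
      rw [← ofReal_norm_eq_coe_nnnorm]
      have h1 : ‖((g₀ y - g₀ x : ℝ) : ℂ)‖ = dist (g₀ y) (g₀ x) := by
        rw [Complex.norm_real, Real.norm_eq_abs, Real.dist_eq]
      calc ENNReal.ofReal ‖((g₀ y - g₀ x : ℝ) : ℂ)‖
          ≤ ENNReal.ofReal ((c₁:ℝ) * dist y x) := by
            rw [h1]; exact ENNReal.ofReal_le_ofReal (hg.dist_le_mul y x)
        _ = (c₁ : ℝ≥0∞) * ((‖x - y‖₊ : ℝ≥0∞)) := by
            rw [ENNReal.ofReal_mul c₁.coe_nonneg, dist_eq_norm, norm_sub_rev,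
              ofReal_norm_eq_coe_nnnorm, ENNReal.ofReal_coe_nnreal]
    have hinvB : (‖((1 / ‖y‖ : ℝ) : ℂ)‖₊ : ℝ≥0∞) ≤ ((‖y‖₊ : ℝ≥0∞)) ^ (-(1:ℝ)) := by
      have hypos : (0:ℝ) < ‖y‖ := norm_pos_iff.2 hy0
      rw [← ofReal_norm_eq_coe_nnnorm]
      have h1 : ‖((1 / ‖y‖ : ℝ) : ℂ)‖ = ‖y‖ ^ (-(1:ℝ)) := by
        rw [Complex.norm_real, Real.norm_eq_abs, abs_of_nonneg (by positivity),
          Real.rpow_neg_one, one_div]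
      rw [h1, ← ENNReal.ofReal_rpow_of_pos hypos, ofReal_norm_eq_coe_nnnorm]
    calc (‖I x y‖₊ : ℝ≥0∞)
        = u x * (‖K (x, y)‖₊ : ℝ≥0∞) * (‖((g₀ y - g₀ x : ℝ) : ℂ)‖₊ : ℝ≥0∞)
          * (‖((1 / ‖y‖ : ℝ) : ℂ)‖₊ : ℝ≥0∞) * v y := by
          simp [hI, nnnorm_mul, ENNReal.coe_mul, hu, hv, RCLike.nnnorm_conj]
      _ ≤ u x * (ENNReal.ofReal c₀ * ((‖x - y‖₊ : ℝ≥0∞)) ^ (-(3:ℝ)))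
          * ((c₁ : ℝ≥0∞) * ((‖x - y‖₊ : ℝ≥0∞)))
          * ((‖y‖₊ : ℝ≥0∞)) ^ (-(1:ℝ)) * v y := by
          gcongr
      _ = D * W (x, y) := by
          have hdd : ((‖x - y‖₊ : ℝ≥0∞)) ^ (-(3:ℝ)) * ((‖x - y‖₊ : ℝ≥0∞))
              = ((‖x - y‖₊ : ℝ≥0∞)) ^ (-(2:ℝ)) := by
            nth_rewrite 2 [← ENNReal.rpow_one ((‖x - y‖₊ : ℝ≥0∞))]
            rw [← ENNReal.rpow_add _ _ hdne ENNReal.coe_ne_top]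
            norm_num
          simp only [hW, hN, hD]
          rw [← hdd]
          ring
  have hfin : D * (CS * (A * B)) ≠ ⊤ :=
    ENNReal.mul_ne_top hDne (ENNReal.mul_ne_top hCSne (ENNReal.mul_ne_top hAne hBne))
  have htotal : ∫⁻ x, ∫⁻ y, (‖I x y‖₊ : ℝ≥0∞) ≤ D * (CS * (A * B)) := by
    calc ∫⁻ x, ∫⁻ y, (‖I x y‖₊ : ℝ≥0∞) ≤ ∫⁻ x, ∫⁻ y, D * W (x, y) := lintegral_mono hpt
      _ = D * ∫⁻ x, ∫⁻ y, W (x, y) := by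
          rw [← lintegral_const_mul' D _ hDne]
          exact lintegral_congr fun x => lintegral_const_mul' D _ hDne
      _ ≤ D * (CS * (A * B)) := mul_le_mul_right hS _
  calc ‖∫ x, ∫ y, I x y‖
      ≤ (∫⁻ x, ENNReal.ofReal ‖∫ y, I x y‖).toReal := norm_integral_le_lintegral_norm _
    _ ≤ (D * (CS * (A * B))).toReal := by
        refine ENNReal.toReal_mono hfin ?_
        calc ∫⁻ x, ENNReal.ofReal ‖∫ y, I x y‖ = ∫⁻ x, (‖∫ y, I x y‖₊ : ℝ≥0∞) :=
              lintegral_congr fun x => ofReal_norm_eq_coe_nnnorm _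
          _ ≤ ∫⁻ x, ∫⁻ y, (‖I x y‖₊ : ℝ≥0∞) :=
              lintegral_mono fun x => enorm_integral_le_lintegral_enorm _
          _ ≤ D * (CS * (A * B)) := htotal
    _ = (D * CS).toReal * A.toReal * B.toReal := by
        simp only [ENNReal.toReal_mul]
        ring

end
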